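/- Let b ≥ 2, let k, ℓ be positive integers and ε a real with 6/⌊k/ℓ⌋ ≤ ε ≤ 1/b^ℓ. Then for every word w of length ℓ over a b-symbol alphabet, the number of words v of length k with | |v|_w - k·b^{-ℓ} | ≥ εk is less than 4ℓ·b^{k+ℓ}·e^{-b^ℓ ε² k/(6ℓ)}. -/

import Mathlib

/-- Number of occurrences of the length-`ℓ` word `w` in the length-`k` word `v`. -/
noncomputable def occWord {b k ℓ : ℕ} (v : Fin k → Fin b) (w : Fin ℓ → Fin b) : ℕ :=
  Nat.card {j : ℕ // j + ℓ ≤ k ∧ ∀ t : Fin ℓ, ∀ h : j + (t : ℕ) < k, v ⟨j + (t : ℕ), h⟩ = w t}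

open Finset

open Classical in
noncomputable def blockEquiv {b k ℓ c : ℕ} (ι : Fin c × Fin ℓ → Fin k)
    (hι : Function.Injective ι) :
    ((Fin c × Fin ℓ → Fin b) × ({j // j ∉ Set.range ι} → Fin b)) ≃ (Fin k → Fin b) where
  toFun uz j := if h : j ∈ Set.range ι then uz.1 ((Equiv.ofInjective ι hι).symm ⟨j, h⟩)
    else uz.2 ⟨j, h⟩
  invFun v := (fun q => v (ι q), fun j => v j.1)
  left_inv uz := by
    obtain ⟨u, z⟩ := uz
    refine Prod.ext ?_ ?_
    · funext q
      simp only [dif_pos (Set.mem_range_self q)]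
      have : (⟨ι q, Set.mem_range_self q⟩ : Set.range ι) = (Equiv.ofInjective ι hι) q := rfl
      rw [this, Equiv.symm_apply_apply]
    · funext j
      simp only
      rw [dif_neg j.2]
  right_inv v := by
    funext j
    by_cases h : j ∈ Set.range ι
    · simp only [dif_pos h]
      exact congrArg v (congrArg Subtype.val ((Equiv.ofInjective ι hι).apply_symm_apply ⟨j, h⟩))
    · simp only [dif_neg h]

lemma blockEquiv_apply_ι {b k ℓ c : ℕ} (ι : Fin c × Fin ℓ → Fin k)
    (hι : Function.Injective ι) (u : Fin c × Fin ℓ → Fin b)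
    (z : {j // j ∉ Set.range ι} → Fin b)
    (q : Fin c × Fin ℓ) : blockEquiv ι hι (u, z) (ι q) = u q := by
  simp only [blockEquiv, Equiv.coe_fn_mk, dif_pos (Set.mem_range_self q)]
  have : (⟨ι q, Set.mem_range_self q⟩ : Set.range ι) = (Equiv.ofInjective ι hι) q := rfl
  rw [this, Equiv.symm_apply_apply]

lemma sum_prod_blocks {b k ℓ c : ℕ} (ι : Fin c × Fin ℓ → Fin k)
    (hι : Function.Injective ι) (φ : (Fin ℓ → Fin b) → ℝ) :
    ∑ v : Fin k → Fin b, ∏ i : Fin c, φ (fun t => v (ι (i, t)))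
      = (b : ℝ) ^ (k - c * ℓ) * (∑ x : Fin ℓ → Fin b, φ x) ^ c := by
  classical
  rw [← Equiv.sum_comp (blockEquiv (b := b) ι hι)]
  have h1 : ∀ (uz : (Fin c × Fin ℓ → Fin b) × ({j // j ∉ Set.range ι} → Fin b)),
      (∏ i : Fin c, φ (fun t => blockEquiv ι hι uz (ι (i, t))))
        = ∏ i : Fin c, φ (fun t => uz.1 (i, t)) := by
    intro ⟨u, z⟩
    exact Finset.prod_congr rfl fun i _ => congrArg φ (funext fun t =>
      blockEquiv_apply_ι ι hι u z (i, t))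
  rw [Finset.sum_congr rfl (fun uz _ => h1 uz)]
  rw [Fintype.sum_prod_type]
  have hre : ∀ u : Fin c × Fin ℓ → Fin b,
      ∑ _z : {j // j ∉ Set.range ι} → Fin b, (∏ i : Fin c, φ (fun t => u (i, t)))
        = (b : ℝ) ^ (k - c * ℓ) * ∏ i : Fin c, φ (fun t => u (i, t)) := by
    intro u
    rw [Finset.sum_const, card_univ, nsmul_eq_mul]
    congr 2
    rw [Fintype.card_fun, Fintype.card_fin]
    congr 1
    rw [Fintype.card_subtype_compl]  -- maybe wrong name
    · push_cast
      have : Fintype.card (Set.range ι) = c * ℓ := by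
        rw [Set.card_range_of_injective hι]; simp
      rw [this, Fintype.card_fin]
  rw [Finset.sum_congr rfl (fun u _ => hre u), ← Finset.mul_sum]
  congr 1
  rw [show (∑ u : Fin c × Fin ℓ → Fin b, ∏ i : Fin c, φ (fun t => u (i, t)))
      = ∑ h : Fin c → Fin ℓ → Fin b, ∏ i : Fin c, φ (h i) from
    Equiv.sum_comp (Equiv.curry (Fin c) (Fin ℓ) (Fin b))
      (fun h : Fin c → Fin ℓ → Fin b => ∏ i, φ (h i))]
  rw [show ((∑ x : Fin ℓ → Fin b, φ x) ^ c : ℝ)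
      = ∏ _i : Fin c, ∑ x : Fin ℓ → Fin b, φ x by
        rw [Finset.prod_const, card_univ, Fintype.card_fin]]
  rw [Finset.prod_univ_sum]
  rw [Fintype.piFinset_univ]


lemma exp_quad {t : ℝ} (h : |t| ≤ 1) : Real.exp t ≤ 1 + t + (3/4) * t^2 := by
  have h2 := Real.exp_bound h (n := 2) (by norm_num)
  have : |Real.exp t - (1 + t)| ≤ |t|^2 * (3/4) := by
    convert h2 using 2
    · simp [Finset.sum_range_succ]
    · norm_num [Nat.factorial]
  have := abs_le.1 this
  have habs : |t|^2 = t^2 := sq_abs t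
  nlinarith [this.2]


section
variable {b k ℓ c : ℕ}

open Classical in
/-- number of block positions where `w` occurs -/
noncomputable def Docc (ι : Fin c × Fin ℓ → Fin k) (w : Fin ℓ → Fin b)
    (v : Fin k → Fin b) : ℕ :=
  (univ.filter fun i : Fin c => (fun t => v (ι (i, t))) = w).card

lemma sum_prod_blocks' (ι : Fin c × Fin ℓ → Fin k)
    (hι : Function.Injective ι) (φ : (Fin ℓ → Fin b) → ℝ) :
    ∑ v : Fin k → Fin b, ∏ i : Fin c, φ (fun t => v (ι (i, t)))
      = (b : ℝ) ^ (k - c * ℓ) * (∑ x : Fin ℓ → Fin b, φ x) ^ c :=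
  sum_prod_blocks ι hι φ

lemma sum_pow_Docc (ι : Fin c × Fin ℓ → Fin k) (hι : Function.Injective ι)
    (w : Fin ℓ → Fin b) (A : ℝ) :
    ∑ v : Fin k → Fin b, A ^ (Docc ι w v)
      = (b : ℝ) ^ (k - c * ℓ) * (A + ((b:ℝ)^ℓ - 1)) ^ c := by
  classical
  have h1 : ∀ v : Fin k → Fin b,
      A ^ (Docc ι w v) = ∏ i : Fin c, (if (fun t => v (ι (i, t))) = w then A else 1) := by
    intro v
    rw [Finset.prod_ite, Finset.prod_const, Finset.prod_const, one_pow, mul_one, Docc]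
  rw [Finset.sum_congr rfl fun v _ => h1 v]
  have h2 := sum_prod_blocks' (b := b) ι hι (fun x => if x = w then A else 1)
  rw [h2]
  congr 1
  have : ∀ x : Fin ℓ → Fin b, (if x = w then A else 1) = 1 + (if x = w then A - 1 else 0) := by
    intro x; by_cases h : x = w <;> simp [h]
  rw [Finset.sum_congr rfl fun x _ => this x, Finset.sum_add_distrib, Finset.sum_const,
    Finset.sum_ite_eq' univ w, if_pos (mem_univ w), card_univ, Fintype.card_fun,
    Fintype.card_fin, Fintype.card_fin, nsmul_eq_mul]
  push_cast
  ring

lemma count_tail_up (ι : Fin c × Fin ℓ → Fin k) (hι : Function.Injective ι)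
    (w : Fin ℓ → Fin b) (A θ : ℝ) (hA : 1 ≤ A) :
    ((univ.filter fun v : Fin k → Fin b => θ ≤ (Docc ι w v : ℝ)).card : ℝ) * A ^ θ
      ≤ (b : ℝ) ^ (k - c * ℓ) * (A + ((b:ℝ)^ℓ - 1)) ^ c := by
  classical
  have hA0 : (0:ℝ) < A := lt_of_lt_of_le one_pos hA
  rw [← sum_pow_Docc ι hι w A]
  calc ((univ.filter fun v : Fin k → Fin b => θ ≤ (Docc ι w v : ℝ)).card : ℝ) * A ^ θ
      = ∑ _v ∈ (univ.filter fun v : Fin k → Fin b => θ ≤ (Docc ι w v : ℝ)), A ^ θ := by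
        rw [Finset.sum_const, nsmul_eq_mul]
    _ ≤ ∑ v ∈ (univ.filter fun v : Fin k → Fin b => θ ≤ (Docc ι w v : ℝ)),
          A ^ (Docc ι w v) := by
        refine Finset.sum_le_sum fun v hv => ?_
        have hv' := (Finset.mem_filter.1 hv).2
        calc A ^ θ ≤ A ^ ((Docc ι w v : ℝ)) := Real.rpow_le_rpow_of_exponent_le hA hv'
          _ = A ^ (Docc ι w v) := Real.rpow_natCast A _
    _ ≤ ∑ v : Fin k → Fin b, A ^ (Docc ι w v) :=
        Finset.sum_le_sum_of_subset_of_nonneg (Finset.filter_subset _ _)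
          (fun v _ _ => pow_nonneg hA0.le _)

lemma count_tail_lo (ι : Fin c × Fin ℓ → Fin k) (hι : Function.Injective ι)
    (w : Fin ℓ → Fin b) (A θ : ℝ) (hA0 : 0 < A) (hA : A ≤ 1) :
    ((univ.filter fun v : Fin k → Fin b => (Docc ι w v : ℝ) ≤ θ).card : ℝ) * A ^ θ
      ≤ (b : ℝ) ^ (k - c * ℓ) * (A + ((b:ℝ)^ℓ - 1)) ^ c := by
  classical
  rw [← sum_pow_Docc ι hι w A]
  calc ((univ.filter fun v : Fin k → Fin b => (Docc ι w v : ℝ) ≤ θ).card : ℝ) * A ^ θ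
      = ∑ _v ∈ (univ.filter fun v : Fin k → Fin b => (Docc ι w v : ℝ) ≤ θ), A ^ θ := by
        rw [Finset.sum_const, nsmul_eq_mul]
    _ ≤ ∑ v ∈ (univ.filter fun v : Fin k → Fin b => (Docc ι w v : ℝ) ≤ θ),
          A ^ (Docc ι w v) := by
        refine Finset.sum_le_sum fun v hv => ?_
        have hv' := (Finset.mem_filter.1 hv).2
        calc A ^ θ ≤ A ^ ((Docc ι w v : ℝ)) := Real.rpow_le_rpow_of_exponent_ge hA0 hA hv'
          _ = A ^ (Docc ι w v) := Real.rpow_natCast A _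
    _ ≤ ∑ v : Fin k → Fin b, A ^ (Docc ι w v) :=
        Finset.sum_le_sum_of_subset_of_nonneg (Finset.filter_subset _ _)
          (fun v _ _ => pow_nonneg hA0.le _)


lemma rhs_bound (hclk : c * ℓ ≤ k) (hb : 1 ≤ b) {A : ℝ} (hA0 : 0 < A) :
    (b:ℝ)^(k - c*ℓ) * (A + ((b:ℝ)^ℓ - 1))^c
      ≤ (b:ℝ)^k * Real.exp ((c : ℝ) * (((b:ℝ)^ℓ)⁻¹ * (A - 1))) := by
  have hbR : (1:ℝ) ≤ (b:ℝ) := by exact_mod_cast hb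
  have hbl : (1:ℝ) ≤ (b:ℝ)^ℓ := one_le_pow₀ hbR
  have hblpos : (0:ℝ) < (b:ℝ)^ℓ := lt_of_lt_of_le one_pos hbl
  have key : A + ((b:ℝ)^ℓ - 1) ≤ (b:ℝ)^ℓ * Real.exp (((b:ℝ)^ℓ)⁻¹ * (A - 1)) := by
    have h1 : 1 + ((b:ℝ)^ℓ)⁻¹ * (A - 1) ≤ Real.exp (((b:ℝ)^ℓ)⁻¹ * (A - 1)) := by
      have := Real.add_one_le_exp (((b:ℝ)^ℓ)⁻¹ * (A - 1)); linarith
    calc A + ((b:ℝ)^ℓ - 1) = (b:ℝ)^ℓ * (1 + ((b:ℝ)^ℓ)⁻¹ * (A - 1)) := by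
          field_simp; ring
      _ ≤ (b:ℝ)^ℓ * Real.exp (((b:ℝ)^ℓ)⁻¹ * (A - 1)) := by
          exact mul_le_mul_of_nonneg_left h1 hblpos.le
    
  have hnn : (0:ℝ) ≤ A + ((b:ℝ)^ℓ - 1) := by nlinarith
  calc (b:ℝ)^(k - c*ℓ) * (A + ((b:ℝ)^ℓ - 1))^c
      ≤ (b:ℝ)^(k - c*ℓ) * ((b:ℝ)^ℓ * Real.exp (((b:ℝ)^ℓ)⁻¹ * (A - 1)))^c := by
        refine mul_le_mul_of_nonneg_left (pow_le_pow_left₀ hnn key c) (by positivity)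
    _ = (b:ℝ)^k * Real.exp ((c:ℝ) * (((b:ℝ)^ℓ)⁻¹ * (A - 1))) := by
        have he : k - c*ℓ + ℓ*c = k := by rw [Nat.mul_comm ℓ c]; omega
        rw [mul_pow, ← pow_mul, ← Real.exp_nat_mul, ← mul_assoc, ← pow_add, he]

lemma class_tail_up (ι : Fin c × Fin ℓ → Fin k) (hι : Function.Injective ι)
    (w : Fin ℓ → Fin b) (hclk : c * ℓ ≤ k) (hb : 1 ≤ b)
    (t δ : ℝ) (ht0 : 0 ≤ t) (ht1 : t ≤ 1) :
    ((univ.filter fun v : Fin k → Fin b =>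
        (c : ℝ) * ((b:ℝ)^ℓ)⁻¹ + δ ≤ (Docc ι w v : ℝ)).card : ℝ)
      ≤ (b:ℝ)^k * Real.exp ((3/4) * c * ((b:ℝ)^ℓ)⁻¹ * t^2 - t * δ) := by
  set p : ℝ := ((b:ℝ)^ℓ)⁻¹ with hp
  set θ : ℝ := (c:ℝ) * p + δ with hθ
  have hA : 1 ≤ Real.exp t := by nlinarith [Real.add_one_le_exp t]
  have h1 := count_tail_up ι hι w (Real.exp t) θ hA
  have h2 := rhs_bound (c := c) hclk hb (Real.exp_pos t)
  have hexpθ : (Real.exp t) ^ θ = Real.exp (t * θ) := by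
    rw [Real.rpow_def_of_pos (Real.exp_pos t), Real.log_exp]
  have hppos : 0 < p := by positivity
  have hcp : (0:ℝ) ≤ (c:ℝ) * p := by positivity
  have hquad : Real.exp t ≤ 1 + t + (3/4) * t^2 := exp_quad (abs_le.2 ⟨by linarith, ht1⟩)
  have hfin : (c:ℝ) * (p * (Real.exp t - 1)) - t * θ ≤ (3/4) * c * p * t^2 - t * δ := by
    rw [hθ]
    nlinarith [mul_le_mul_of_nonneg_left hquad hcp]
  calc ((univ.filter fun v : Fin k → Fin b => θ ≤ (Docc ι w v : ℝ)).card : ℝ)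
      = (((univ.filter fun v : Fin k → Fin b => θ ≤ (Docc ι w v : ℝ)).card : ℝ)
          * (Real.exp t) ^ θ) * Real.exp (- (t * θ)) := by
        rw [hexpθ, mul_assoc, ← Real.exp_add]; simp
    _ ≤ ((b:ℝ)^k * Real.exp ((c:ℝ) * (p * (Real.exp t - 1)))) * Real.exp (-(t * θ)) := by
        refine mul_le_mul_of_nonneg_right (h1.trans h2) (Real.exp_pos _).le
    _ = (b:ℝ)^k * Real.exp ((c:ℝ) * (p * (Real.exp t - 1)) - t * θ) := by
        rw [mul_assoc, ← Real.exp_add]; ring_nf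
    _ ≤ (b:ℝ)^k * Real.exp ((3/4) * c * p * t^2 - t * δ) := by
        refine mul_le_mul_of_nonneg_left (Real.exp_le_exp.2 hfin) (by positivity)

lemma class_tail_lo (ι : Fin c × Fin ℓ → Fin k) (hι : Function.Injective ι)
    (w : Fin ℓ → Fin b) (hclk : c * ℓ ≤ k) (hb : 1 ≤ b)
    (t δ : ℝ) (ht0 : 0 ≤ t) (ht1 : t ≤ 1) :
    ((univ.filter fun v : Fin k → Fin b =>
        (Docc ι w v : ℝ) ≤ (c : ℝ) * ((b:ℝ)^ℓ)⁻¹ - δ).card : ℝ)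
      ≤ (b:ℝ)^k * Real.exp ((3/4) * c * ((b:ℝ)^ℓ)⁻¹ * t^2 - t * δ) := by
  set p : ℝ := ((b:ℝ)^ℓ)⁻¹ with hp
  set θ : ℝ := (c:ℝ) * p - δ with hθ
  have hA0 : 0 < Real.exp (-t) := Real.exp_pos _
  have hA : Real.exp (-t) ≤ 1 := Real.exp_le_one_iff.2 (by linarith)
  have h1 := count_tail_lo ι hι w (Real.exp (-t)) θ hA0 hA
  have h2 := rhs_bound (c := c) hclk hb hA0
  have hexpθ : (Real.exp (-t)) ^ θ = Real.exp (-t * θ) := by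
    rw [Real.rpow_def_of_pos hA0, Real.log_exp]
  have hppos : 0 < p := by positivity
  have hcp : (0:ℝ) ≤ (c:ℝ) * p := by positivity
  have hquad : Real.exp (-t) ≤ 1 + (-t) + (3/4) * (-t)^2 :=
    exp_quad (by rw [abs_neg]; exact abs_le.2 ⟨by linarith, ht1⟩)
  have hfin : (c:ℝ) * (p * (Real.exp (-t) - 1)) + t * θ ≤ (3/4) * c * p * t^2 - t * δ := by
    rw [hθ]
    nlinarith [mul_le_mul_of_nonneg_left hquad hcp]
  calc ((univ.filter fun v : Fin k → Fin b => (Docc ι w v : ℝ) ≤ θ).card : ℝ)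
      = (((univ.filter fun v : Fin k → Fin b => (Docc ι w v : ℝ) ≤ θ).card : ℝ)
          * (Real.exp (-t)) ^ θ) * Real.exp (t * θ) := by
        rw [hexpθ, mul_assoc, ← Real.exp_add]; simp
    _ ≤ ((b:ℝ)^k * Real.exp ((c:ℝ) * (p * (Real.exp (-t) - 1)))) * Real.exp (t * θ) := by
        refine mul_le_mul_of_nonneg_right (h1.trans h2) (Real.exp_pos _).le
    _ = (b:ℝ)^k * Real.exp ((c:ℝ) * (p * (Real.exp (-t) - 1)) + t * θ) := by
        rw [mul_assoc, ← Real.exp_add]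
    _ ≤ (b:ℝ)^k * Real.exp ((3/4) * c * p * t^2 - t * δ) := by
        refine mul_le_mul_of_nonneg_left (Real.exp_le_exp.2 hfin) (by positivity)

end


/-- size of residue class `r` among block start positions -/
def cnt (k ℓ r : ℕ) : ℕ := (k - ℓ - r) / ℓ + 1

lemma partition_lemma (k ℓ : ℕ) (hℓ : 1 ≤ ℓ) (hk : 2 * ℓ ≤ k)
    (Q : ℕ → Prop) [DecidablePred Q] :
    ((range (k - ℓ + 1)).filter Q).card
      = ∑ r ∈ range ℓ, ((range (cnt k ℓ r)).filter fun i => Q (i * ℓ + r)).card := by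
  rw [Finset.card_eq_sum_card_fiberwise
    (f := fun j => j % ℓ) (t := range ℓ)
    (fun j _ => mem_range.2 (Nat.mod_lt j hℓ))]
  refine Finset.sum_congr rfl fun r hr => ?_
  have hrℓ : r < ℓ := mem_range.1 hr
  have hc : cnt k ℓ r = (k - ℓ - r) / ℓ + 1 := rfl
  refine (Finset.card_bij' (fun i _ => i * ℓ + r) (fun j _ => j / ℓ) ?_ ?_ ?_ ?_).symm
  · intro i hi
    have hi' := Finset.mem_filter.1 hi
    have hi1 : i < cnt k ℓ r := mem_range.1 hi'.1
    have hle : i * ℓ ≤ k - ℓ - r := by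
      have h0 : i ≤ (k - ℓ - r) / ℓ := by omega
      exact (Nat.le_div_iff_mul_le hℓ).1 h0
    have hm : i * ℓ + r < k - ℓ + 1 := by omega
    refine Finset.mem_filter.2 ⟨Finset.mem_filter.2 ⟨mem_range.2 hm, hi'.2⟩, ?_⟩
    show (i * ℓ + r) % ℓ = r
    rw [Nat.mul_comm, Nat.mul_add_mod]
    exact Nat.mod_eq_of_lt hrℓ
  · intro j hj
    have hj' := Finset.mem_filter.1 hj
    have hj1 := Finset.mem_filter.1 hj'.1
    have hjr : j % ℓ = r := hj'.2
    have hjk : j < k - ℓ + 1 := mem_range.1 hj1.1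
    have hdm := Nat.div_add_mod j ℓ
    have hmc : j / ℓ * ℓ = ℓ * (j / ℓ) := Nat.mul_comm _ _
    refine Finset.mem_filter.2 ⟨?_, ?_⟩
    · show j / ℓ ∈ range (cnt k ℓ r)
      refine mem_range.2 ?_
      have h2 : (j / ℓ) * ℓ ≤ k - ℓ - r := by omega
      have h3 := (Nat.le_div_iff_mul_le hℓ).2 h2
      omega
    · have h4 : j / ℓ * ℓ + r = j := by omega
      show Q (j / ℓ * ℓ + r)
      rw [h4]; exact hj1.2
  · intro i hi
    show (i * ℓ + r) / ℓ = i
    rw [add_comm, Nat.mul_comm, Nat.add_mul_div_left _ _ hℓ, Nat.div_eq_of_lt hrℓ, zero_add]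
  · intro j hj
    have hj' := Finset.mem_filter.1 hj
    have hjr : j % ℓ = r := hj'.2
    have hdm := Nat.div_add_mod j ℓ
    have hmc : j / ℓ * ℓ = ℓ * (j / ℓ) := Nat.mul_comm _ _
    show j / ℓ * ℓ + r = j
    omega

lemma sum_cnt (k ℓ : ℕ) (hℓ : 1 ≤ ℓ) (hk : 2 * ℓ ≤ k) :
    ∑ r ∈ range ℓ, cnt k ℓ r = k - ℓ + 1 := by
  classical
  have := partition_lemma k ℓ hℓ hk (fun _ => True)
  simpa using this.symm


def blockEmb (k ℓ r : ℕ) (hk : 1 ≤ k) : Fin (cnt k ℓ r) × Fin ℓ → Fin k :=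
  fun q => ⟨min (q.1 * ℓ + r + q.2) (k - 1), by omega⟩

lemma cnt_le (k ℓ r : ℕ) (hr : r < ℓ) (hk : 2 * ℓ ≤ k) {i : ℕ} (hi : i < cnt k ℓ r) :
    i * ℓ ≤ k - ℓ - r := by
  have hc : cnt k ℓ r = (k - ℓ - r) / ℓ + 1 := rfl
  have h0 : i ≤ (k - ℓ - r) / ℓ := by omega
  exact (Nat.le_div_iff_mul_le (by omega)).1 h0

lemma blockEmb_val (k ℓ r : ℕ) (hk : 1 ≤ k) (hr : r < ℓ) (hk2 : 2 * ℓ ≤ k)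
    (q : Fin (cnt k ℓ r) × Fin ℓ) :
    (blockEmb k ℓ r hk q).val = q.1 * ℓ + r + q.2 := by
  obtain ⟨⟨i, hi⟩, ⟨t, ht⟩⟩ := q
  have h2 := cnt_le k ℓ r hr hk2 hi
  simp only [blockEmb]
  omega

lemma blockEmb_inj (k ℓ r : ℕ) (hk : 1 ≤ k) (hr : r < ℓ) (hk2 : 2 * ℓ ≤ k) :
    Function.Injective (blockEmb k ℓ r hk) := by
  have hℓ : 0 < ℓ := by omega
  rintro q1 q2 h
  have hval : q1.1.val * ℓ + r + q1.2.val = q2.1.val * ℓ + r + q2.2.val := by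
    rw [← blockEmb_val k ℓ r hk hr hk2 q1, ← blockEmb_val k ℓ r hk hr hk2 q2, h]
  have e1 : q1.1.val * ℓ + q1.2.val = q2.1.val * ℓ + q2.2.val := by omega
  have d : ∀ i t : ℕ, t < ℓ → (i * ℓ + t) / ℓ = i := by
    intro i t htℓ
    rw [add_comm, Nat.mul_comm, Nat.add_mul_div_left _ _ hℓ, Nat.div_eq_of_lt htℓ, zero_add]
  have hi : q1.1.val = q2.1.val := by
    have d1 := d q1.1.val q1.2.val q1.2.isLt
    have d2 := d q2.1.val q2.2.val q2.2.isLt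
    rw [e1] at d1; rw [d1] at d2; exact d2
  have ht : q1.2.val = q2.2.val := by
    have e2 : q1.1.val * ℓ = q2.1.val * ℓ := by rw [hi]
    omega
  exact Prod.ext (Fin.ext hi) (Fin.ext ht)

lemma cnt_mul_le (k ℓ r : ℕ) (hr : r < ℓ) (hk2 : 2 * ℓ ≤ k) : cnt k ℓ r * ℓ ≤ k := by
  have h := Nat.div_mul_le_self (k - ℓ - r) ℓ
  have he : cnt k ℓ r * ℓ = (k - ℓ - r) / ℓ * ℓ + ℓ := by rw [cnt]; ring
  omega

lemma occWord_eq_sum {b k ℓ : ℕ} (hℓ : 1 ≤ ℓ) (hk : 1 ≤ k) (hk2 : 2 * ℓ ≤ k)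
    (v : Fin k → Fin b) (w : Fin ℓ → Fin b) :
    occWord v w = ∑ r ∈ range ℓ, Docc (blockEmb k ℓ r hk) w v := by
  classical
  set P : ℕ → Prop := fun j => j + ℓ ≤ k ∧ ∀ t : Fin ℓ, ∀ h : j + (t : ℕ) < k,
    v ⟨j + (t : ℕ), h⟩ = w t with hP
  have step1 : occWord v w = ((range (k - ℓ + 1)).filter P).card := by
    rw [occWord, ← Nat.card_eq_finsetCard]
    refine Nat.card_congr (Equiv.subtypeEquivRight fun j => ?_)
    simp only [mem_filter, mem_range, hP]
    constructor
    · intro hj; exact ⟨by omega, hj⟩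
    · exact fun hj => hj.2
  rw [step1, partition_lemma k ℓ hℓ hk2 P]
  refine Finset.sum_congr rfl fun r hr => ?_
  have hrℓ : r < ℓ := mem_range.1 hr
  rw [Docc]
  refine Finset.card_bij' (fun i hi => (⟨i, (mem_filter.1 hi).1 |> mem_range.1⟩ : Fin (cnt k ℓ r)))
    (fun i _ => i.val) ?_ ?_ ?_ ?_
  · intro i hi
    have hi' := mem_filter.1 hi
    have hii : i < cnt k ℓ r := mem_range.1 hi'.1
    have hQ : P (i * ℓ + r) := hi'.2
    refine mem_filter.2 ⟨mem_univ _, ?_⟩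
    funext t
    have hv : (blockEmb k ℓ r hk (⟨⟨i, hii⟩, t⟩)).val = i * ℓ + r + t :=
      blockEmb_val k ℓ r hk hrℓ hk2 _
    have hlt : (i * ℓ + r) + (t : ℕ) < k := by
      have := cnt_le k ℓ r hrℓ hk2 hii
      have := t.isLt
      omega
    have heq : blockEmb k ℓ r hk (⟨⟨i, hii⟩, t⟩) = ⟨(i * ℓ + r) + t, hlt⟩ := by
      apply Fin.ext; rw [hv]
    rw [heq]
    exact hQ.2 t hlt
  · intro i hi
    have hi' := mem_filter.1 hi
    have hQ' : (fun t => v (blockEmb k ℓ r hk (i, t))) = w := hi'.2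
    refine mem_filter.2 ⟨mem_range.2 i.isLt, ?_⟩
    have hlt' : (i : ℕ) * ℓ ≤ k - ℓ - r := cnt_le k ℓ r hrℓ hk2 i.isLt
    show P ((i : ℕ) * ℓ + r)
    refine ⟨by omega, fun t h => ?_⟩
    have hv : (blockEmb k ℓ r hk (i, t)).val = (i : ℕ) * ℓ + r + t :=
      blockEmb_val k ℓ r hk hrℓ hk2 _
    have heq : (⟨(i : ℕ) * ℓ + r + (t : ℕ), h⟩ : Fin k) = blockEmb k ℓ r hk (i, t) := by
      apply Fin.ext; rw [hv]
    rw [heq]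
    exact congrFun hQ' t
  · intro i hi; rfl
  · intro i hi; rfl

set_option maxHeartbeats 1600000 in
theorem bad_words_bound (b : ℕ) (hb : 2 ≤ b) (k ℓ : ℕ) (hk : 1 ≤ k) (hℓ : 1 ≤ ℓ)
    (ε : ℝ) (hε1 : 6 / ((k / ℓ : ℕ) : ℝ) ≤ ε) (hε2 : ε ≤ 1 / (b : ℝ) ^ ℓ)
    (w : Fin ℓ → Fin b) :
    (Nat.card {v : Fin k → Fin b //
        ε * k ≤ |(occWord v w : ℝ) - (k : ℝ) * (b : ℝ) ^ (-(ℓ : ℤ))|} : ℝ)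
      < 4 * (ℓ : ℝ) * (b : ℝ) ^ (k + ℓ) *
        Real.exp (-((b : ℝ) ^ ℓ * ε ^ 2 * (k : ℝ)) / (6 * (ℓ : ℝ))) := by
  have hbR : (2:ℝ) ≤ (b:ℝ) := by exact_mod_cast hb
  have hb1 : 1 ≤ b := by omega
  have hℓR : (1:ℝ) ≤ (ℓ:ℝ) := by exact_mod_cast hℓ
  have hbl2 : (2:ℝ) ≤ (b:ℝ)^ℓ := by
    calc (2:ℝ) ≤ (b:ℝ) := hbR
    _ = (b:ℝ)^1 := (pow_one _).symm
    _ ≤ (b:ℝ)^ℓ := pow_le_pow_right₀ (by linarith) hℓ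
  have hblpos : (0:ℝ) < (b:ℝ)^ℓ := by linarith
  have hzp : ((b:ℝ) : ℝ)^(-(ℓ:ℤ)) = ((b:ℝ)^ℓ)⁻¹ := by
    rw [zpow_neg, zpow_natCast]
  have hppos : (0:ℝ) < ((b:ℝ)^ℓ)⁻¹ := by positivity
  have hp2 : ((b:ℝ)^ℓ)⁻¹ ≤ 1/2 := by
    rw [inv_le_comm₀ hblpos (by norm_num)]
    linarith
  have hε2' : ε ≤ ((b:ℝ)^ℓ)⁻¹ := by rwa [← one_div]
  have hbkpos : (0:ℝ) < (b:ℝ)^k := by positivity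
  have hEpos : (0:ℝ) < Real.exp (-((b : ℝ) ^ ℓ * ε ^ 2 * (k : ℝ)) / (6 * (ℓ : ℝ))) :=
    Real.exp_pos _
  rcases Nat.lt_or_ge k ℓ with hkl | hkl
  · -- trivial case k < ℓ
    have hm0 : k / ℓ = 0 := Nat.div_eq_of_lt hkl
    have hε0 : 0 ≤ ε := by
      rw [hm0] at hε1
      simpa using hε1
    have hcard : (Nat.card {v : Fin k → Fin b //
        ε * k ≤ |(occWord v w : ℝ) - (k : ℝ) * (b : ℝ) ^ (-(ℓ : ℤ))|} : ℝ) ≤ (b:ℝ)^k := by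
      classical
      have h1 : Nat.card {v : Fin k → Fin b //
          ε * k ≤ |(occWord v w : ℝ) - (k : ℝ) * (b : ℝ) ^ (-(ℓ : ℤ))|}
          ≤ Fintype.card (Fin k → Fin b) := by
        rw [Nat.card_eq_fintype_card]
        exact Fintype.card_subtype_le _
      have h2 : Fintype.card (Fin k → Fin b) = b ^ k := by
        simp [Fintype.card_fun]
      rw [h2] at h1
      exact_mod_cast h1
    refine lt_of_le_of_lt hcard ?_
    have hklR : (k:ℝ) ≤ (ℓ:ℝ) := by exact_mod_cast hkl.le
    have hY : ((b:ℝ)^ℓ * ε^2 * k) / (6*ℓ) ≤ 1/12 := by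
      have h1 : (b:ℝ)^ℓ * ε^2 ≤ ((b:ℝ)^ℓ)⁻¹ := by
        have h2 : ε^2 ≤ (((b:ℝ)^ℓ)⁻¹)^2 := by nlinarith
        have h3 : (b:ℝ)^ℓ * (((b:ℝ)^ℓ)⁻¹)^2 = ((b:ℝ)^ℓ)⁻¹ := by
          field_simp
        nlinarith
      rw [div_le_div_iff₀ (by positivity) (by norm_num)]
      have hkpos : (0:ℝ) ≤ (k:ℝ) := Nat.cast_nonneg k
      nlinarith [mul_le_mul_of_nonneg_right h1 hkpos]
    have hexp : (11:ℝ)/12 ≤ Real.exp (-((b : ℝ) ^ ℓ * ε ^ 2 * (k : ℝ)) / (6 * (ℓ : ℝ))) := by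
      have := Real.add_one_le_exp (-((b : ℝ) ^ ℓ * ε ^ 2 * (k : ℝ)) / (6 * (ℓ : ℝ)))
      rw [neg_div] at this ⊢
      linarith
    have hsplit : (b:ℝ)^(k+ℓ) = (b:ℝ)^k * (b:ℝ)^ℓ := pow_add _ _ _
    rw [hsplit]
    nlinarith [mul_pos hbkpos hblpos, mul_le_mul_of_nonneg_left hexp
      (by positivity : (0:ℝ) ≤ 4 * (ℓ:ℝ) * ((b:ℝ)^k * (b:ℝ)^ℓ))]
  · -- main case: ℓ ≤ k
    have hm1 : 1 ≤ k / ℓ := (Nat.one_le_div_iff (by omega)).2 hkl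
    have hmRpos : (0:ℝ) < ((k / ℓ : ℕ) : ℝ) := by exact_mod_cast hm1
    have hε0 : 0 < ε := lt_of_lt_of_le (by positivity) hε1
    have hm12 : (12:ℝ) ≤ ((k / ℓ : ℕ) : ℝ) := by
      have h1 : 6 / ((k / ℓ : ℕ) : ℝ) ≤ 1/2 := le_trans hε1 (le_trans hε2' hp2)
      rw [div_le_div_iff₀ hmRpos (by norm_num)] at h1
      linarith
    have hm12n : 12 ≤ k / ℓ := by exact_mod_cast hm12
    have hmlk : (k / ℓ) * ℓ ≤ k := Nat.div_mul_le_self k ℓ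
    have hk2 : 2 * ℓ ≤ k := by
      have h1 : 12 * ℓ ≤ (k / ℓ) * ℓ := Nat.mul_le_mul_right ℓ hm12n
      omega
    have hℓpos : (0:ℝ) < (ℓ:ℝ) := by linarith
    have hεk : 6 * (ℓ:ℝ) ≤ ε * k := by
      have hmlkR : ((k / ℓ : ℕ) : ℝ) * (ℓ:ℝ) ≤ (k:ℝ) := by exact_mod_cast hmlk
      have h2 : (6 / ((k / ℓ : ℕ) : ℝ)) * k ≤ ε * k :=
        mul_le_mul_of_nonneg_right hε1 (Nat.cast_nonneg k)
      have h3 : 6 * (ℓ:ℝ) ≤ (6 / ((k / ℓ : ℕ) : ℝ)) * k := by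
        rw [div_mul_eq_mul_div, le_div_iff₀ hmRpos]
        nlinarith
      linarith
    set δ : ℝ := (ε * k - ℓ) / ℓ with hδdef
    have hδℓ : δ * ℓ = ε * k - ℓ := by
      rw [hδdef]; field_simp
    have hδpos : 0 < δ := by
      rw [hδdef]; apply div_pos; linarith; exact hℓpos
    set t : ℝ := ε * (b:ℝ)^ℓ / 2 with htdef
    have ht0 : 0 ≤ t := by positivity
    have ht1 : t ≤ 1 := by
      have h1 : ε * (b:ℝ)^ℓ ≤ ((b:ℝ)^ℓ)⁻¹ * (b:ℝ)^ℓ :=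
        mul_le_mul_of_nonneg_right hε2' hblpos.le
      rw [inv_mul_cancel₀ (ne_of_gt hblpos)] at h1
      rw [htdef]; linarith
    -- the per-class exponent inequality
    have key : ∀ r, r < ℓ → (3/4) * (cnt k ℓ r : ℝ) * ((b:ℝ)^ℓ)⁻¹ * t^2 - t * δ
        ≤ -((b : ℝ) ^ ℓ * ε ^ 2 * (k : ℝ)) / (6 * (ℓ : ℝ)) := by
      intro r hr
      have hcl := cnt_mul_le k ℓ r hr hk2
      have hclR : (cnt k ℓ r : ℝ) * (ℓ:ℝ) ≤ (k:ℝ) := by exact_mod_cast hcl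
      have hpt : ((b:ℝ)^ℓ)⁻¹ * t^2 = ε^2 * (b:ℝ)^ℓ / 4 := by
        rw [htdef]; field_simp; ring
      have h6ℓ : (0:ℝ) < 6 * (ℓ:ℝ) := by positivity
      rw [le_div_iff₀ h6ℓ]
      have hcinv : (cnt k ℓ r : ℝ) * (ℓ:ℝ) * (((b:ℝ)^ℓ)⁻¹ * t^2)
          ≤ (k:ℝ) * (((b:ℝ)^ℓ)⁻¹ * t^2) :=
        mul_le_mul_of_nonneg_right hclR (by positivity)
      have hA5 : (k:ℝ) * (((b:ℝ)^ℓ)⁻¹ * t^2) = ε^2 * k * (b:ℝ)^ℓ / 4 := by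
        rw [hpt]; ring
      have hA3 : t * (δ * ℓ) = t * (ε*k) - t * ℓ := by rw [hδℓ]; ring
      have hA4 : t * (ε*k) = ε^2 * k * (b:ℝ)^ℓ / 2 := by rw [htdef]; ring
      have hA2 : t * ℓ ≤ t * (ε*k/6) := mul_le_mul_of_nonneg_left (by linarith) ht0
      nlinarith [mul_nonneg (mul_nonneg (sq_nonneg ε) (Nat.cast_nonneg k : (0:ℝ) ≤ k))
        hblpos.le]
    -- the bad set as a finset
    have hNc : (Nat.card {v : Fin k → Fin b //
        ε * k ≤ |(occWord v w : ℝ) - (k : ℝ) * (b : ℝ) ^ (-(ℓ : ℤ))|})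
        = (univ.filter (fun v : Fin k → Fin b =>
            ε * k ≤ |(occWord v w : ℝ) - (k : ℝ) * (b : ℝ) ^ (-(ℓ : ℤ))|)).card := by
      rw [Nat.card_eq_fintype_card, Fintype.card_subtype]
    have hcover : (univ.filter (fun v : Fin k → Fin b =>
            ε * k ≤ |(occWord v w : ℝ) - (k : ℝ) * (b : ℝ) ^ (-(ℓ : ℤ))|))
        ⊆ (range ℓ).biUnion (fun r =>
          (univ.filter fun v : Fin k → Fin b =>
            (cnt k ℓ r : ℝ) * ((b:ℝ)^ℓ)⁻¹ + δ ≤ (Docc (blockEmb k ℓ r hk) w v : ℝ))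
          ∪ (univ.filter fun v : Fin k → Fin b =>
            (Docc (blockEmb k ℓ r hk) w v : ℝ) ≤ (cnt k ℓ r : ℝ) * ((b:ℝ)^ℓ)⁻¹ - δ)) := by
      intro v hv
      have hvbad : ε * k ≤ |(occWord v w : ℝ) - (k:ℝ) * (b:ℝ)^(-(ℓ:ℤ))| :=
        (mem_filter.1 hv).2
      rw [hzp] at hvbad
      by_contra hno
      simp only [mem_biUnion, mem_union, mem_filter, mem_univ, true_and] at hno
      push_neg at hno
      have habs : ∀ r ∈ range ℓ,
          |(Docc (blockEmb k ℓ r hk) w v : ℝ) - (cnt k ℓ r : ℝ) * ((b:ℝ)^ℓ)⁻¹| < δ := by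
        intro r hr
        obtain ⟨h1, h2⟩ := hno r hr
        rw [abs_lt]
        constructor <;> linarith
      have hsum : (occWord v w : ℝ)
          = ∑ r ∈ range ℓ, (Docc (blockEmb k ℓ r hk) w v : ℝ) := by
        rw [occWord_eq_sum hℓ hk hk2 v w]
        push_cast
        rfl
      have hcsum : ∑ r ∈ range ℓ, (cnt k ℓ r : ℝ) = (k:ℝ) - ℓ + 1 := by
        have h := sum_cnt k ℓ hℓ hk2
        have h2 : ((∑ r ∈ range ℓ, cnt k ℓ r : ℕ) : ℝ) = ((k - ℓ + 1 : ℕ) : ℝ) := by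
          rw [h]
        push_cast [hkl] at h2
        simpa using h2
      have hdiff : (occWord v w : ℝ) - (k:ℝ) * ((b:ℝ)^ℓ)⁻¹
          = (∑ r ∈ range ℓ, ((Docc (blockEmb k ℓ r hk) w v : ℝ)
              - (cnt k ℓ r : ℝ) * ((b:ℝ)^ℓ)⁻¹))
            + ((k:ℝ) - ℓ + 1 - k) * ((b:ℝ)^ℓ)⁻¹ := by
        rw [hsum, Finset.sum_sub_distrib, ← Finset.sum_mul, hcsum]
        ring
      have hstrict : ∑ r ∈ range ℓ,
          |(Docc (blockEmb k ℓ r hk) w v : ℝ) - (cnt k ℓ r : ℝ) * ((b:ℝ)^ℓ)⁻¹|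
          < ∑ _r ∈ range ℓ, δ := by
        refine Finset.sum_lt_sum_of_nonempty ?_ habs
        exact nonempty_range_iff.2 (by omega)
      have hsd : (∑ _r ∈ range ℓ, δ) = (ℓ:ℝ) * δ := by
        rw [Finset.sum_const, card_range, nsmul_eq_mul]
      have hc1 : |((k:ℝ) - ℓ + 1 - k) * ((b:ℝ)^ℓ)⁻¹| ≤ (ℓ:ℝ) - 1 := by
        rw [abs_of_nonpos (by nlinarith)]
        nlinarith
      have hlt : |(occWord v w : ℝ) - (k:ℝ) * ((b:ℝ)^ℓ)⁻¹| < ε * k := by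
        rw [hdiff]
        have h1 := abs_add_le
          (∑ r ∈ range ℓ, ((Docc (blockEmb k ℓ r hk) w v : ℝ)
            - (cnt k ℓ r : ℝ) * ((b:ℝ)^ℓ)⁻¹))
          (((k:ℝ) - ℓ + 1 - k) * ((b:ℝ)^ℓ)⁻¹)
        have h2 := Finset.abs_sum_le_sum_abs
          (fun r => (Docc (blockEmb k ℓ r hk) w v : ℝ)
            - (cnt k ℓ r : ℝ) * ((b:ℝ)^ℓ)⁻¹) (range ℓ)
        have h3 : (ℓ:ℝ) * δ = ε * k - ℓ := by
          rw [mul_comm]; exact hδℓ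
        linarith
      linarith
    have hcard1 : (univ.filter (fun v : Fin k → Fin b =>
            ε * k ≤ |(occWord v w : ℝ) - (k : ℝ) * (b : ℝ) ^ (-(ℓ : ℤ))|)).card
        ≤ ∑ r ∈ range ℓ,
          ((univ.filter fun v : Fin k → Fin b =>
            (cnt k ℓ r : ℝ) * ((b:ℝ)^ℓ)⁻¹ + δ ≤ (Docc (blockEmb k ℓ r hk) w v : ℝ)).card
          + (univ.filter fun v : Fin k → Fin b =>
            (Docc (blockEmb k ℓ r hk) w v : ℝ) ≤ (cnt k ℓ r : ℝ) * ((b:ℝ)^ℓ)⁻¹ - δ).card) :=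
      (Finset.card_le_card hcover).trans (Finset.card_biUnion_le.trans
        (Finset.sum_le_sum fun r _ => Finset.card_union_le _ _))
    have hup : ∀ r ∈ range ℓ,
        ((univ.filter fun v : Fin k → Fin b =>
          (cnt k ℓ r : ℝ) * ((b:ℝ)^ℓ)⁻¹ + δ ≤ (Docc (blockEmb k ℓ r hk) w v : ℝ)).card : ℝ)
        ≤ (b:ℝ)^k * Real.exp (-((b : ℝ) ^ ℓ * ε ^ 2 * (k : ℝ)) / (6 * (ℓ : ℝ))) := by
      intro r hr
      have hrℓ := mem_range.1 hr
      have h1 := class_tail_up (blockEmb k ℓ r hk) (blockEmb_inj k ℓ r hk hrℓ hk2) w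
        (cnt_mul_le k ℓ r hrℓ hk2) hb1 t δ ht0 ht1
      exact h1.trans (mul_le_mul_of_nonneg_left
        (Real.exp_le_exp.2 (key r hrℓ)) (by positivity))
    have hlo : ∀ r ∈ range ℓ,
        ((univ.filter fun v : Fin k → Fin b =>
          (Docc (blockEmb k ℓ r hk) w v : ℝ) ≤ (cnt k ℓ r : ℝ) * ((b:ℝ)^ℓ)⁻¹ - δ).card : ℝ)
        ≤ (b:ℝ)^k * Real.exp (-((b : ℝ) ^ ℓ * ε ^ 2 * (k : ℝ)) / (6 * (ℓ : ℝ))) := by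
      intro r hr
      have hrℓ := mem_range.1 hr
      have h1 := class_tail_lo (blockEmb k ℓ r hk) (blockEmb_inj k ℓ r hk hrℓ hk2) w
        (cnt_mul_le k ℓ r hrℓ hk2) hb1 t δ ht0 ht1
      exact h1.trans (mul_le_mul_of_nonneg_left
        (Real.exp_le_exp.2 (key r hrℓ)) (by positivity))
    rw [hNc]
    set E : ℝ := Real.exp (-((b : ℝ) ^ ℓ * ε ^ 2 * (k : ℝ)) / (6 * (ℓ : ℝ))) with hE
    calc ((univ.filter (fun v : Fin k → Fin b =>
            ε * k ≤ |(occWord v w : ℝ) - (k : ℝ) * (b : ℝ) ^ (-(ℓ : ℤ))|)).card : ℝ)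
        ≤ ∑ r ∈ range ℓ,
          (((univ.filter fun v : Fin k → Fin b =>
            (cnt k ℓ r : ℝ) * ((b:ℝ)^ℓ)⁻¹ + δ ≤ (Docc (blockEmb k ℓ r hk) w v : ℝ)).card : ℝ)
          + ((univ.filter fun v : Fin k → Fin b =>
            (Docc (blockEmb k ℓ r hk) w v : ℝ) ≤ (cnt k ℓ r : ℝ) * ((b:ℝ)^ℓ)⁻¹ - δ).card : ℝ))
          := by exact_mod_cast hcard1
      _ ≤ ∑ _r ∈ range ℓ, 2 * ((b:ℝ)^k * E) := by
          refine Finset.sum_le_sum fun r hr => ?_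
          have := hup r hr
          have := hlo r hr
          linarith
      _ = (ℓ:ℝ) * (2 * ((b:ℝ)^k * E)) := by
          rw [Finset.sum_const, card_range, nsmul_eq_mul]
      _ < 4 * (ℓ:ℝ) * (b:ℝ)^(k+ℓ) * E := by
          rw [pow_add]
          nlinarith [mul_pos (mul_pos hℓpos hbkpos) hEpos]
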